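/- For every n ≥ 3 such that n is not a power of 2, the order superpower graph S(D_{2n}) of the dihedral group D_{2n} of order 2n is not minimally edge connected. -/

import Mathlib

/-- The degree of a vertex: the number of its neighbours. -/
noncomputable def gDeg {V : Type*} (G : SimpleGraph V) (v : V) : ℕ :=
  (G.neighborSet v).ncard

/-- The minimum degree of a graph. -/
noncomputable def minDeg {V : Type*} (G : SimpleGraph V) : ℕ :=
  sInf (Set.range (gDeg G))

/-- The edge connectivity: the minimum size of a set of edges whose removal
disconnects the graph. -/
noncomputable def edgeConn {V : Type*} (G : SimpleGraph V) : ℕ :=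
  sInf {n : ℕ | ∃ S : Set (Sym2 V), S ⊆ G.edgeSet ∧ S.ncard = n ∧
    ¬ (G.deleteEdges S).Connected}

/-- The vertex connectivity: the minimum size of a set of vertices whose removal
disconnects the graph or leaves a single vertex. -/
noncomputable def vertexConn {V : Type*} (G : SimpleGraph V) : ℕ :=
  sInf {n : ℕ | ∃ S : Set V, S.ncard = n ∧ Sᶜ.Nonempty ∧
    (¬ (G.induce Sᶜ).Preconnected ∨ Sᶜ.ncard = 1)}

/-- A graph is minimally edge connected if deleting any edge decreases the
edge connectivity by one. -/
def MinEdgeConnected {V : Type*} (G : SimpleGraph V) : Prop :=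
  ∀ e ∈ G.edgeSet, edgeConn (G.deleteEdges {e}) = edgeConn G - 1

/-- A graph is minimally connected if deleting any edge decreases the
vertex connectivity by one. -/
def MinConnected {V : Type*} (G : SimpleGraph V) : Prop :=
  ∀ e ∈ G.edgeSet, vertexConn (G.deleteEdges {e}) = vertexConn G - 1

/-- The power graph of a group: distinct `x, y` are adjacent iff one is a
natural power of the other. -/
def powerGraph (G : Type*) [Group G] : SimpleGraph G :=
  SimpleGraph.fromRel (fun x y => ∃ m : ℕ, y = x ^ m)

/-- The enhanced power graph of a group: distinct `x, y` are adjacent iff they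
lie in a common cyclic subgroup. -/
def enhancedPowerGraph (G : Type*) [Group G] : SimpleGraph G :=
  SimpleGraph.fromRel
    (fun x y => ∃ z : G, x ∈ Subgroup.zpowers z ∧ y ∈ Subgroup.zpowers z)

/-- The order superpower graph of a group: distinct `x, y` are adjacent iff the
order of one divides the order of the other. -/
def superpowerGraph (G : Type*) [Group G] : SimpleGraph G :=
  SimpleGraph.fromRel (fun x y => orderOf x ∣ orderOf y)

section AuxLemmas

open Set SimpleGraph

section Universal
variable {V : Type*} [Fintype V] (G : SimpleGraph V)

/-- Cardinality of the incidence set is the degree. -/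
lemma ncard_incidenceSet (v : V) : (G.incidenceSet v).ncard = gDeg G v := by
  haveI := Classical.decEq V
  rw [gDeg, ← Nat.card_coe_set_eq, ← Nat.card_coe_set_eq]
  exact Nat.card_congr (G.incidenceSetEquivNeighborSet v)

/-- Lower bound: any disconnecting edge set has at least `minDeg` edges,
when there is a universal vertex. -/
lemma minDeg_le_of_cut (u : V) (hu : ∀ v, v ≠ u → G.Adj u v)
    (S : Set (Sym2 V)) (hS : ¬ (G.deleteEdges S).Connected) :
    minDeg G ≤ S.ncard := by
  haveI : Nonempty V := ⟨u⟩
  set G' := G.deleteEdges S with hG'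
  have hpre : ¬ G'.Preconnected := fun h => hS ⟨h⟩
  rw [SimpleGraph.Preconnected] at hpre
  push_neg at hpre
  obtain ⟨a, b, hab⟩ := hpre
  set A : Set V := {x | G'.Reachable u x} with hA
  have huA : u ∈ A := SimpleGraph.Reachable.refl u
  -- some vertex is not reachable from u
  have hBne : (Aᶜ).Nonempty := by
    by_contra h
    rw [Set.not_nonempty_iff_eq_empty, ← Set.compl_univ, compl_inj_iff] at h
    have ha : a ∈ A := h ▸ Set.mem_univ a
    have hb : b ∈ A := h ▸ Set.mem_univ b
    exact hab (ha.symm.trans hb)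
  obtain ⟨v₀, hv₀⟩ := hBne
  -- key: edges from Aᶜ to A are all in S
  have key : ∀ v ∈ Aᶜ, ∀ w ∈ A, G.Adj v w → s(v, w) ∈ S := by
    intro v hv w hw hadj
    by_contra hmem
    have : G'.Adj w v := by
      rw [hG', SimpleGraph.deleteEdges_adj]
      exact ⟨hadj.symm, by rwa [Sym2.eq_swap]⟩
    exact hv (hw.trans this.toWalk.reachable)
  have hv₀u : v₀ ≠ u := fun h => hv₀ (h ▸ huA)
  set N : Set V := G.neighborSet v₀ with hN
  -- two families of edges inside S
  have h1 : (fun w => s(v₀, w)) '' (N ∩ A) ⊆ S := by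
    rintro _ ⟨w, ⟨hwN, hwA⟩, rfl⟩
    exact key v₀ hv₀ w hwA hwN
  have h2 : (fun v => s(u, v)) '' (Aᶜ \ {v₀}) ⊆ S := by
    rintro _ ⟨v, ⟨hvB, _⟩, rfl⟩
    have hvu : v ≠ u := fun h => hvB (h ▸ huA)
    have := key v hvB u huA (hu v hvu).symm
    rwa [Sym2.eq_swap] at this
  have hdisj : Disjoint ((fun w => s(v₀, w)) '' (N ∩ A)) ((fun v => s(u, v)) '' (Aᶜ \ {v₀})) := by
    rw [Set.disjoint_left]
    rintro _ ⟨w, ⟨hwN, hwA⟩, rfl⟩ ⟨v, ⟨hvB, hvne⟩, heq⟩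
    rw [Sym2.eq_iff] at heq
    rcases heq with ⟨h1', h2'⟩ | ⟨h1', h2'⟩
    · exact hv₀ (h1' ▸ huA)
    · exact hvne (Set.mem_singleton_iff.mpr h2')
  have hinj1 : Set.InjOn (fun w => s(v₀, w)) (N ∩ A) := by
    intro w hw w' hw' h
    rw [Sym2.eq_iff] at h
    rcases h with ⟨_, h⟩ | ⟨h1', h2'⟩
    · exact h
    · exfalso; rw [← h1'] at hw'; exact hv₀ hw'.2
  have hinj2 : Set.InjOn (fun v => s(u, v)) (Aᶜ \ {v₀}) := by
    intro w hw w' hw' h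
    rw [Sym2.eq_iff] at h
    rcases h with ⟨_, h⟩ | ⟨h1', h2'⟩
    · exact h
    · exfalso; rw [← h1'] at hw'; exact hw'.1 huA
  have hcard : (N ∩ A).ncard + (Aᶜ \ {v₀}).ncard ≤ S.ncard := by
    rw [← Set.ncard_image_of_injOn hinj1, ← Set.ncard_image_of_injOn hinj2,
      ← Set.ncard_union_eq hdisj]
    exact Set.ncard_le_ncard (Set.union_subset h1 h2)
  -- N splits into N∩A and N∩Aᶜ, and N∩Aᶜ ⊆ Aᶜ \ {v₀}
  have hsplit : N.ncard ≤ (N ∩ A).ncard + (N ∩ Aᶜ).ncard := by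
    have : N = (N ∩ A) ∪ (N ∩ Aᶜ) := by
      rw [← Set.inter_union_distrib_left, Set.union_compl_self, Set.inter_univ]
    calc N.ncard = ((N ∩ A) ∪ (N ∩ Aᶜ)).ncard := by rw [← this]
      _ ≤ _ := Set.ncard_union_le _ _
  have hsub : (N ∩ Aᶜ).ncard ≤ (Aᶜ \ {v₀}).ncard := by
    refine Set.ncard_le_ncard ?_ (Set.toFinite _)
    rintro x ⟨hxN, hxB⟩
    refine ⟨hxB, fun h => ?_⟩
    rw [Set.mem_singleton_iff] at h
    rw [h, SimpleGraph.mem_neighborSet] at hxN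
    exact G.loopless.irrefl v₀ hxN
  have hdeg : minDeg G ≤ N.ncard := Nat.sInf_le ⟨v₀, rfl⟩
  omega

/-- If `G` has a universal vertex and at least two vertices, then
`edgeConn G = minDeg G`. -/
lemma edgeConn_eq_minDeg (u : V) (hu : ∀ v, v ≠ u → G.Adj u v)
    (h2 : 2 ≤ Fintype.card V) : edgeConn G = minDeg G := by
  haveI : Nonempty V := ⟨u⟩
  obtain ⟨v, hv⟩ : minDeg G ∈ Set.range (gDeg G) := Nat.sInf_mem (Set.range_nonempty _)
  -- the incidence set of the minimum degree vertex is a disconnecting set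
  have hmem : minDeg G ∈ {n : ℕ | ∃ S : Set (Sym2 V), S ⊆ G.edgeSet ∧ S.ncard = n ∧
      ¬ (G.deleteEdges S).Connected} := by
    refine ⟨G.incidenceSet v, G.incidenceSet_subset v, by rw [ncard_incidenceSet, hv], ?_⟩
    intro hcon
    obtain ⟨w, hw⟩ := Fintype.exists_ne_of_one_lt_card (by omega) v
    obtain ⟨p⟩ := hcon.preconnected v w
    cases p with
    | nil => exact hw rfl
    | cons h p =>
      rw [SimpleGraph.deleteEdges_adj] at h
      exact h.2 ⟨G.mem_edgeSet.mpr h.1, Sym2.mem_mk_left _ _⟩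
  refine le_antisymm (Nat.sInf_le hmem) ?_
  obtain ⟨S, _, hcard, hdis⟩ := Nat.sInf_mem (Set.nonempty_of_mem hmem)
  rw [edgeConn] at *
  calc minDeg G ≤ S.ncard := minDeg_le_of_cut G u hu S hdis
    _ = _ := hcard

/-- Deleting an edge between two vertices of non-minimal degree does not
change the minimum degree. -/
lemma minDeg_deleteEdges {x y : V} (hxy : G.Adj x y)
    (hx : minDeg G < gDeg G x) (hy : minDeg G < gDeg G y) :
    minDeg (G.deleteEdges {s(x, y)}) = minDeg G := by
  haveI : Nonempty V := ⟨x⟩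
  set G' := G.deleteEdges {s(x, y)} with hG'
  have hle : ∀ v, minDeg G ≤ gDeg G' v := by
    intro v
    by_cases hvx : v = x
    · subst hvx
      have hsub : G.neighborSet v \ {y} ⊆ G'.neighborSet v := by
        rintro w ⟨hw, hwy⟩
        rw [SimpleGraph.mem_neighborSet, hG', SimpleGraph.deleteEdges_adj]
        refine ⟨hw, fun h => ?_⟩
        rw [Set.mem_singleton_iff, Sym2.eq_iff] at h
        rcases h with ⟨_, h⟩ | ⟨h, _⟩
        · exact hwy (Set.mem_singleton_iff.mpr h)
        · exact hxy.ne h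
      have hym : y ∈ G.neighborSet v := hxy
      have h1 : (G.neighborSet v \ {y}).ncard = gDeg G v - 1 := by
        rw [Set.ncard_diff_singleton_of_mem hym]
        rfl
      have h2 : (G.neighborSet v \ {y}).ncard ≤ gDeg G' v :=
        Set.ncard_le_ncard hsub (Set.toFinite _)
      omega
    by_cases hvy : v = y
    · subst hvy
      have hsub : G.neighborSet v \ {x} ⊆ G'.neighborSet v := by
        rintro w ⟨hw, hwx⟩
        rw [SimpleGraph.mem_neighborSet, hG', SimpleGraph.deleteEdges_adj]
        refine ⟨hw, fun h => ?_⟩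
        rw [Set.mem_singleton_iff, Sym2.eq_iff] at h
        rcases h with ⟨h, _⟩ | ⟨_, h⟩
        · exact hxy.ne h.symm
        · exact hwx (Set.mem_singleton_iff.mpr h)
      have hxm : x ∈ G.neighborSet v := hxy.symm
      have h1 : (G.neighborSet v \ {x}).ncard = gDeg G v - 1 := by
        rw [Set.ncard_diff_singleton_of_mem hxm]
        rfl
      have h2 : (G.neighborSet v \ {x}).ncard ≤ gDeg G' v :=
        Set.ncard_le_ncard hsub (Set.toFinite _)
      omega
    · have : G'.neighborSet v = G.neighborSet v := by
        ext w
        rw [SimpleGraph.mem_neighborSet, SimpleGraph.mem_neighborSet, hG',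
          SimpleGraph.deleteEdges_adj]
        constructor
        · exact fun h => h.1
        · refine fun h => ⟨h, fun hmem => ?_⟩
          rw [Set.mem_singleton_iff, Sym2.eq_iff] at hmem
          rcases hmem with ⟨h1, _⟩ | ⟨h1, _⟩
          · exact hvx h1
          · exact hvy h1
      have : gDeg G' v = gDeg G v := by rw [gDeg, gDeg, this]
      rw [this]
      exact Nat.sInf_le ⟨v, rfl⟩
  -- a witness of minimum degree is neither x nor y
  obtain ⟨w, hw⟩ : minDeg G ∈ Set.range (gDeg G) := Nat.sInf_mem (Set.range_nonempty _)
  have hwx : w ≠ x := fun h => by rw [← h, hw] at hx; omega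
  have hwy : w ≠ y := fun h => by rw [← h, hw] at hy; omega
  have hset : G'.neighborSet w = G.neighborSet w := by
    ext z
    rw [SimpleGraph.mem_neighborSet, SimpleGraph.mem_neighborSet, hG',
      SimpleGraph.deleteEdges_adj]
    constructor
    · exact fun h => h.1
    · refine fun h => ⟨h, fun hmem => ?_⟩
      rw [Set.mem_singleton_iff, Sym2.eq_iff] at hmem
      rcases hmem with ⟨h1, _⟩ | ⟨h1, _⟩
      · exact hwx h1
      · exact hwy h1
  have hww : gDeg G' w = gDeg G w := by rw [gDeg, gDeg, hset]
  have hub : minDeg G' ≤ minDeg G := by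
    rw [← hw, ← hww]
    exact Nat.sInf_le ⟨w, rfl⟩
  have hlb : minDeg G ≤ minDeg G' := by
    obtain ⟨z, hz⟩ : minDeg G' ∈ Set.range (gDeg G') := Nat.sInf_mem (Set.range_nonempty _)
    rw [← hz]
    exact hle z
  omega

end Universal


end AuxLemmas

open DihedralGroup Set SimpleGraph

/-- For `n ≥ 3` not a power of `2`, the order superpower graph of
the dihedral group of order `2n` is not minimally edge connected. -/
theorem stmt_12 (n : ℕ) (hn : 3 ≤ n) (hpow : ¬ ∃ k : ℕ, n = 2 ^ k) :
    ¬ MinEdgeConnected (superpowerGraph (DihedralGroup n)) := by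
  intro hMEC
  have hM : ∀ e ∈ (superpowerGraph (DihedralGroup n)).edgeSet,
      edgeConn ((superpowerGraph (DihedralGroup n)).deleteEdges {e}) =
        edgeConn (superpowerGraph (DihedralGroup n)) - 1 := hMEC
  revert hM
  haveI : NeZero n := ⟨by omega⟩
  haveI : Fact (1 < n) := ⟨by omega⟩
  set G := superpowerGraph (DihedralGroup n) with hGdef
  -- the odd part m of n
  set m := n / 2 ^ (n.factorization 2) with hm
  have hprod : 2 ^ (n.factorization 2) * m = n := Nat.ordProj_mul_ordCompl_eq_self n 2
  have hmdvd : m ∣ n := Nat.ordCompl_dvd n 2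
  have hmodd : ¬ 2 ∣ m := Nat.not_dvd_ordCompl Nat.prime_two (by omega)
  have hm1 : m ≠ 1 := fun h => hpow ⟨n.factorization 2, by rw [h, mul_one] at hprod; omega⟩
  have hm0 : m ≠ 0 := by intro h; rw [h, mul_zero] at hprod; omega
  have hm3 : 3 ≤ m := by
    by_contra h
    push_neg at h
    interval_cases m
    · exact hm0 rfl
    · exact hm1 rfl
    · exact hmodd ⟨1, rfl⟩
  -- the rotation of odd order m
  set a : DihedralGroup n := r 1 ^ (n / m) with ha
  have horda : orderOf a = m := by
    rw [ha, orderOf_pow, orderOf_r_one, Nat.gcd_eq_right (Nat.div_dvd_of_dvd hmdvd),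
      Nat.div_div_self hmdvd (by omega)]
  -- r is injective
  have rinj : Function.Injective (r (n := n)) := fun i j h => by injection h
  have srinj : Function.Injective (sr (n := n)) := fun i j h => by injection h
  -- a has degree at most n - 1
  have hub : gDeg G a ≤ n - 1 := by
    have hsub : G.neighborSet a ⊆ Set.range r \ {a} := by
      intro w hw
      rw [SimpleGraph.mem_neighborSet, hGdef, superpowerGraph, SimpleGraph.fromRel_adj] at hw
      obtain ⟨hne, hdvd⟩ := hw
      refine ⟨?_, fun h => hne (Set.mem_singleton_iff.mp h).symm⟩
      match w with
      | r j => exact ⟨j, rfl⟩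
      | sr j =>
        exfalso
        rw [horda, orderOf_sr] at hdvd
        rcases hdvd with h | h
        · have := Nat.le_of_dvd (by omega) h
          omega
        · exact hmodd h
    calc gDeg G a ≤ (Set.range r \ {a}).ncard := Set.ncard_le_ncard hsub (Set.toFinite _)
      _ = n - 1 := by
        have hmem : a ∈ Set.range r := ⟨((n / m : ℕ) : ZMod n), by rw [ha, r_one_pow]⟩
        rw [Set.ncard_diff_singleton_of_mem hmem, ← Nat.card_coe_set_eq,
          Nat.card_range_of_injective rinj, Nat.card_zmod]
  -- each reflection has degree at least n
  have hlb : ∀ i : ZMod n, n ≤ gDeg G (sr i) := by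
    intro i
    have hsub : insert (1 : DihedralGroup n) (sr '' {j | j ≠ i}) ⊆ G.neighborSet (sr i) := by
      rintro w hw
      rw [SimpleGraph.mem_neighborSet, hGdef, superpowerGraph, SimpleGraph.fromRel_adj]
      rcases hw with rfl | ⟨j, hj, rfl⟩
      · exact ⟨by simp [one_def, -r_zero], Or.inr (by rw [orderOf_one]; exact one_dvd _)⟩
      · exact ⟨fun h => hj (srinj h).symm, Or.inl (by rw [orderOf_sr, orderOf_sr])⟩
    have h1 : (1 : DihedralGroup n) ∉ sr '' {j | j ≠ i} := by
      rintro ⟨j, _, hj⟩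
      rw [one_def] at hj
      exact (by simp [-r_zero] : (sr j : DihedralGroup n) ≠ r 0) hj
    have h2 : (sr '' {j | j ≠ i}).ncard = n - 1 := by
      rw [Set.ncard_image_of_injective _ srinj]
      have : {j : ZMod n | j ≠ i} = Set.univ \ {i} := by
        ext j; simp [Set.mem_diff]
      rw [this, Set.ncard_diff_singleton_of_mem (Set.mem_univ i), Set.ncard_univ, Nat.card_zmod]
    calc n = (insert (1 : DihedralGroup n) (sr '' {j | j ≠ i})).ncard := by
          rw [Set.ncard_insert_of_notMem h1 (Set.toFinite _), h2]; omega
      _ ≤ gDeg G (sr i) := Set.ncard_le_ncard hsub (Set.toFinite _)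
  -- 1 is a universal vertex
  have hu : ∀ v : DihedralGroup n, v ≠ 1 → G.Adj 1 v := by
    intro v hv
    rw [hGdef, superpowerGraph, SimpleGraph.fromRel_adj]
    exact ⟨fun h => hv h.symm, Or.inl (by rw [orderOf_one]; exact one_dvd _)⟩
  have h2card : 2 ≤ Fintype.card (DihedralGroup n) := by rw [DihedralGroup.card]; omega
  -- minimum degree bounds
  have hminle : minDeg G ≤ n - 1 := le_trans (Nat.sInf_le ⟨a, rfl⟩) hub
  have hminpos : 1 ≤ minDeg G := by
    obtain ⟨v, hv⟩ : minDeg G ∈ Set.range (gDeg G) := Nat.sInf_mem (Set.range_nonempty _)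
    rw [← hv]
    have : (G.neighborSet v).Nonempty := by
      by_cases hv1 : v = 1
      · exact ⟨sr 0, by rw [SimpleGraph.mem_neighborSet, hv1]; exact hu (sr 0) (by simp [one_def, -r_zero])⟩
      · exact ⟨1, (hu v hv1).symm⟩
    rw [gDeg]
    exact (Set.ncard_pos (Set.toFinite _)).mpr this
  -- the chosen edge between two reflections
  have h01 : (0 : ZMod n) ≠ 1 := zero_ne_one
  have hadj : G.Adj (sr 0) (sr 1) := by
    rw [hGdef, superpowerGraph, SimpleGraph.fromRel_adj]
    exact ⟨fun h => h01 (srinj h), Or.inl (by rw [orderOf_sr, orderOf_sr])⟩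
  intro hM
  have he : s(sr (0 : ZMod n), sr 1) ∈ G.edgeSet := G.mem_edgeSet.mpr hadj
  have key := hM _ he
  -- 1 is still universal after deleting the edge
  have hu' : ∀ v : DihedralGroup n, v ≠ 1 →
      (G.deleteEdges {s(sr (0 : ZMod n), sr 1)}).Adj 1 v := by
    intro v hv
    rw [SimpleGraph.deleteEdges_adj]
    refine ⟨hu v hv, fun h => ?_⟩
    rw [Set.mem_singleton_iff, Sym2.eq_iff] at h
    rcases h with ⟨h1, _⟩ | ⟨h1, _⟩
    · exact (by simp [one_def, -r_zero] : (1 : DihedralGroup n) ≠ sr 0) h1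
    · exact (by simp [one_def, -r_zero] : (1 : DihedralGroup n) ≠ sr 1) h1
  have hx : minDeg G < gDeg G (sr 0) := lt_of_le_of_lt (by omega) (lt_of_lt_of_le (by omega : n - 1 < n) (hlb 0))
  have hy : minDeg G < gDeg G (sr 1) := lt_of_le_of_lt (by omega) (lt_of_lt_of_le (by omega : n - 1 < n) (hlb 1))
  rw [edgeConn_eq_minDeg G 1 hu h2card,
    edgeConn_eq_minDeg (G.deleteEdges {s(sr (0 : ZMod n), sr 1)}) 1 hu' h2card,
    minDeg_deleteEdges G hadj hx hy] at key
  omega
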